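/- arXiv:2412.04581 — 2 statements merged into one kernel-verified Lean document; each statement's English description precedes it below -/
import Mathlib

section
/- Let f ∈ C^∞(ℝ²) be analytic with radius of convergence Λ > 0. Then for every λ with 0 < λ < Λ, both series ‖f‖_{H,λ} = Σ_{n≥0} |f|_{λ,n}/(n!)² and |f|_{H,λ} = Σ_{n≥1} n² |f|_{λ,n}/(n!)² are finite (in particular each |f|_{λ,n} is finite). -/
open scoped BigOperators Nat
open MeasureTheory Filter

noncomputable section

/-- Supremum norm over `ℝ²` of a function of two real variables. -/
def sup2 (f : ℝ → ℝ → ℝ) : ℝ := ⨆ x : ℝ, ⨆ v : ℝ, |f x v|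

/-- Supremum norm over `ℝ`. -/
def sup1 (f : ℝ → ℝ) : ℝ := ⨆ x : ℝ, |f x|

/-- Mixed partial derivative `∂ₓᵏ ∂ᵥˡ f`. -/
def D2 (k l : ℕ) (f : ℝ → ℝ → ℝ) : ℝ → ℝ → ℝ :=
  fun x v => iteratedDeriv k (fun y => iteratedDeriv l (f y) v) x

/-- The coefficient `((k+l)!/(k+l-n)!) · λ^{k+l-n}/(k! l!)` for `k+l ≥ n`, else `0`. -/
def acoeff (lam : ℝ) (n k l : ℕ) : ℝ :=
  if n ≤ k + l then
    ((k + l).factorial : ℝ) / ((k + l - n).factorial : ℝ) * lam ^ (k + l - n)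
      / ((k.factorial : ℝ) * (l.factorial : ℝ))
  else 0

/-- `|f|_{λ,n}` for functions of two variables. -/
def pn2 (lam : ℝ) (n : ℕ) (f : ℝ → ℝ → ℝ) : ℝ :=
  ∑' p : ℕ × ℕ, acoeff lam n p.1 p.2 * sup2 (D2 p.1 p.2 f)

/-- `|ρ|_{λ,n}` for functions of one variable. -/
def pn1 (lam : ℝ) (n : ℕ) (ρ : ℝ → ℝ) : ℝ :=
  ∑' k : ℕ, acoeff lam n k 0 * sup1 (iteratedDeriv k ρ)

/-- `‖f‖_{H,λ}`. -/
def Hnorm2 (lam : ℝ) (f : ℝ → ℝ → ℝ) : ℝ :=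
  ∑' n : ℕ, (1 / ((n.factorial : ℝ)) ^ 2) * pn2 lam n f

/-- `|f|_{H,λ}`. -/
def Hsemi2 (lam : ℝ) (f : ℝ → ℝ → ℝ) : ℝ :=
  ∑' n : ℕ, ((n : ℝ) ^ 2 / ((n.factorial : ℝ)) ^ 2) * pn2 lam n f

/-- `‖ρ‖_{H,λ}` (one variable). -/
def Hnorm1 (lam : ℝ) (ρ : ℝ → ℝ) : ℝ :=
  ∑' n : ℕ, (1 / ((n.factorial : ℝ)) ^ 2) * pn1 lam n ρ

/-- `|ρ|_{H,λ}` (one variable). -/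
def Hsemi1 (lam : ℝ) (ρ : ℝ → ℝ) : ℝ :=
  ∑' n : ℕ, ((n : ℝ) ^ 2 / ((n.factorial : ℝ)) ^ 2) * pn1 lam n ρ

/-- Analyticity with radius of convergence `Λ` for functions on `ℝ²`. -/
def AnalyticRad2 (Λ : ℝ) (f : ℝ → ℝ → ℝ) : Prop :=
  ContDiff ℝ (⊤ : ℕ∞) (fun p : ℝ × ℝ => f p.1 p.2) ∧
    ∃ C > 0, ∀ k l : ℕ,
      Λ ^ (k + l) / ((k.factorial : ℝ) * (l.factorial : ℝ)) * sup2 (D2 k l f) ≤ C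

/-- Analyticity with radius of convergence `Λ` for functions on `ℝ`. -/
def AnalyticRad1 (Λ : ℝ) (ρ : ℝ → ℝ) : Prop :=
  ContDiff ℝ (⊤ : ℕ∞) ρ ∧
    ∃ C > 0, ∀ k : ℕ, Λ ^ k / (k.factorial : ℝ) * sup1 (iteratedDeriv k ρ) ≤ C

/-- `α(v) = -2v/(1+v²)`. -/
def alphaFn : ℝ → ℝ := fun v => -2 * v / (1 + v ^ 2)

-- auxiliary: binomial bound
lemma choose_mul_pow_le (m n : ℕ) (s : ℝ) (hs : 0 ≤ s) :
    (m.choose n : ℝ) * s ^ n ≤ (1 + s) ^ m := by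
  rcases le_or_gt n m with h | h
  · have hpow : (1 + s) ^ m = ∑ j ∈ Finset.range (m + 1), s ^ j * 1 ^ (m - j) * (m.choose j : ℝ) := by
      rw [add_comm 1 s, add_pow]
    rw [hpow]
    have hmem : n ∈ Finset.range (m + 1) := Finset.mem_range.2 (Nat.lt_succ_of_le h)
    have := Finset.single_le_sum (f := fun j => s ^ j * 1 ^ (m - j) * (m.choose j : ℝ))
      (fun j _ => by positivity) hmem
    simpa [mul_comm] using this
  · simp [Nat.choose_eq_zero_of_lt h]
    positivity

set_option maxHeartbeats 1000000 in
/-- If `f ∈ C^∞(ℝ²)` is analytic with radius of convergence `Λ > 0`, then for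
`0 < λ < Λ` both series `‖f‖_{H,λ}` and `|f|_{H,λ}` are finite (and in particular
each `|f|_{λ,n}` is finite, i.e. the defining series converge). -/
theorem Hnorm_Hsemi_finite (f : ℝ → ℝ → ℝ) (Λ : ℝ) (hΛ : 0 < Λ)
    (hf : AnalyticRad2 Λ f) (lam : ℝ) (hlam0 : 0 < lam) (hlamΛ : lam < Λ) :
    (∀ n : ℕ, Summable (fun p : ℕ × ℕ => acoeff lam n p.1 p.2 * sup2 (D2 p.1 p.2 f))) ∧
    Summable (fun n : ℕ => (1 / ((n.factorial : ℝ)) ^ 2) * pn2 lam n f) ∧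
    Summable (fun n : ℕ => ((n : ℝ) ^ 2 / ((n.factorial : ℝ)) ^ 2) * pn2 lam n f) := by
  obtain ⟨-, C, hC0, hC⟩ := hf
  obtain ⟨s, hs0, hr1'⟩ : ∃ s : ℝ, 0 < s ∧ (1 + s) * lam / Λ < 1 := by
    refine ⟨(Λ - lam) / (2 * lam), by apply div_pos <;> linarith, ?_⟩
    rw [div_lt_one hΛ]
    have h2 : (Λ - lam) / (2 * lam) * lam = (Λ - lam) / 2 := by
      field_simp
    nlinarith [h2]
  set r : ℝ := (1 + s) * lam / Λ with hr_def
  have hr0 : 0 < r := by positivity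
  have hr1 : r < 1 := hr1'
  clear_value r
  set B : ℝ := (lam * s)⁻¹ with hB_def
  have hB0 : 0 < B := by positivity
  clear_value B
  set K : ℕ → ℝ := fun n => C * (n.factorial : ℝ) * B ^ n with hK_def
  have hK0 : ∀ n, 0 ≤ K n := fun n => by positivity
  clear_value K
  have hsup0 : ∀ k l, 0 ≤ sup2 (D2 k l f) := fun k l =>
    Real.iSup_nonneg fun x => Real.iSup_nonneg fun v => abs_nonneg _
  have hsup : ∀ k l : ℕ, sup2 (D2 k l f) ≤ C * (k.factorial : ℝ) * (l.factorial : ℝ) / Λ ^ (k + l) := by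
    intro k l
    have h := hC k l
    have hfac : (0:ℝ) < (k.factorial : ℝ) * (l.factorial : ℝ) := by positivity
    have hΛp : (0:ℝ) < Λ ^ (k + l) := by positivity
    rw [div_mul_eq_mul_div, div_le_iff₀ hfac] at h
    rw [le_div_iff₀ hΛp]
    calc sup2 (D2 k l f) * Λ ^ (k+l) = Λ ^ (k+l) * sup2 (D2 k l f) := by ring
    _ ≤ C * ((k.factorial : ℝ) * (l.factorial : ℝ)) := h
    _ = C * (k.factorial : ℝ) * (l.factorial : ℝ) := by ring
  have hac0 : ∀ n k l, 0 ≤ acoeff lam n k l := by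
    intro n k l
    unfold acoeff
    split
    · positivity
    · exact le_refl _
  -- key pointwise bound
  have key : ∀ n k l : ℕ, acoeff lam n k l * sup2 (D2 k l f) ≤ K n * (r ^ k * r ^ l) := by
    intro n k l
    set m := k + l with hm
    by_cases hnm : n ≤ m
    · have hac : acoeff lam n k l =
          (m.factorial : ℝ) / ((m - n).factorial : ℝ) * lam ^ (m - n)
            / ((k.factorial : ℝ) * (l.factorial : ℝ)) := by
        unfold acoeff; rw [if_pos hnm]
      have step1 : acoeff lam n k l * sup2 (D2 k l f) ≤
          acoeff lam n k l * (C * (k.factorial : ℝ) * (l.factorial : ℝ) / Λ ^ m) :=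
        mul_le_mul_of_nonneg_left (hsup k l) (hac0 n k l)
      have step2 : acoeff lam n k l * (C * (k.factorial : ℝ) * (l.factorial : ℝ) / Λ ^ m)
          = C * ((m.choose n : ℝ) * (n.factorial : ℝ)) * lam ^ (m - n) / Λ ^ m := by
        rw [hac]
        have hfacm : (m.factorial : ℝ) = (m.choose n : ℝ) * (n.factorial : ℝ) * ((m - n).factorial : ℝ) := by
          rw_mod_cast [Nat.choose_mul_factorial_mul_factorial hnm]
        rw [hfacm]
        have h1 : ((m - n).factorial : ℝ) ≠ 0 := Nat.cast_ne_zero.2 (Nat.factorial_ne_zero _)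
        have h2 : (k.factorial : ℝ) ≠ 0 := Nat.cast_ne_zero.2 (Nat.factorial_ne_zero _)
        have h3 : (l.factorial : ℝ) ≠ 0 := Nat.cast_ne_zero.2 (Nat.factorial_ne_zero _)
        field_simp
      have hbin : (m.choose n : ℝ) ≤ (1 + s) ^ m / s ^ n := by
        rw [le_div_iff₀ (by positivity)]
        exact choose_mul_pow_le m n s hs0.le
      have step3 : C * ((m.choose n : ℝ) * (n.factorial : ℝ)) * lam ^ (m - n) / Λ ^ m ≤
          K n * r ^ m := by
        have hRHS : K n * r ^ m =
            C * ((1 + s) ^ m / s ^ n * (n.factorial : ℝ)) * (lam ^ m / lam ^ n) / Λ ^ m := by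
          rw [hK_def, hB_def, hr_def]
          have : ((1 + s) * lam / Λ) ^ m = (1 + s) ^ m * lam ^ m / Λ ^ m := by
            rw [div_pow, mul_pow]
          rw [this]
          simp only []
          field_simp
          ring_nf
          rw [inv_pow, inv_pow]
          field_simp
        have hlampow : lam ^ (m - n) = lam ^ m / lam ^ n := by
          rw [eq_div_iff (by positivity), ← pow_add]
          congr 1
          omega
        rw [hRHS, hlampow]
        have : (m.choose n : ℝ) * (n.factorial : ℝ) ≤ (1 + s) ^ m / s ^ n * (n.factorial : ℝ) :=
          mul_le_mul_of_nonneg_right hbin (by positivity)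
        have h4 : (0:ℝ) ≤ lam ^ m / lam ^ n := by positivity
        have h5 : (0:ℝ) < Λ ^ m := by positivity
        gcongr
      calc acoeff lam n k l * sup2 (D2 k l f) ≤ _ := step1
        _ = _ := step2
        _ ≤ K n * r ^ m := step3
        _ = K n * (r ^ k * r ^ l) := by rw [hm, pow_add]
    · have : acoeff lam n k l = 0 := by unfold acoeff; rw [if_neg hnm]
      rw [this, zero_mul]
      have : 0 ≤ r ^ k * r ^ l := by positivity
      exact mul_nonneg (hK0 n) this
  -- summability of the majorant over pairs
  have hgeo : Summable (fun k : ℕ => r ^ k) := summable_geometric_of_lt_one hr0.le hr1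
  have hg : ∀ n : ℕ, Summable (fun p : ℕ × ℕ => K n * (r ^ p.1 * r ^ p.2)) := by
    intro n
    exact (Summable.mul_of_nonneg hgeo hgeo (fun k => by positivity)
      (fun l => by positivity)).mul_left (K n)
  have ht0 : ∀ (n : ℕ) (p : ℕ × ℕ), 0 ≤ acoeff lam n p.1 p.2 * sup2 (D2 p.1 p.2 f) :=
    fun n p => mul_nonneg (hac0 _ _ _) (hsup0 _ _)
  have hsum1 : ∀ n : ℕ, Summable (fun p : ℕ × ℕ => acoeff lam n p.1 p.2 * sup2 (D2 p.1 p.2 f)) :=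
    fun n => Summable.of_nonneg_of_le (ht0 n) (fun p => key n p.1 p.2) (hg n)
  set T : ℝ := ∑' p : ℕ × ℕ, r ^ p.1 * r ^ p.2 with hT_def
  have hT0 : 0 ≤ T := tsum_nonneg fun p => by positivity
  clear_value T
  have hpn : ∀ n : ℕ, pn2 lam n f ≤ K n * T := by
    intro n
    have h := Summable.tsum_le_tsum (f := fun p : ℕ × ℕ => acoeff lam n p.1 p.2 * sup2 (D2 p.1 p.2 f))
      (g := fun p : ℕ × ℕ => K n * (r ^ p.1 * r ^ p.2)) (fun p => key n p.1 p.2) (hsum1 n) (hg n)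
    calc pn2 lam n f = ∑' p : ℕ × ℕ, acoeff lam n p.1 p.2 * sup2 (D2 p.1 p.2 f) := rfl
      _ ≤ ∑' p : ℕ × ℕ, K n * (r ^ p.1 * r ^ p.2) := h
      _ = K n * T := by rw [hT_def, tsum_mul_left]
  have hpn0 : ∀ n : ℕ, 0 ≤ pn2 lam n f := fun n => tsum_nonneg (ht0 n)
  have hmaj : Summable (fun n : ℕ => C * T * ((4 * B) ^ n / (n.factorial : ℝ))) :=
    (Real.summable_pow_div_factorial (4 * B)).mul_left (C * T)
  have hfne : ∀ n : ℕ, ((n.factorial : ℝ)) ≠ 0 := fun n => Nat.cast_ne_zero.2 (Nat.factorial_ne_zero _)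
  have hn4 : ∀ n : ℕ, ((n : ℝ)) ^ 2 ≤ 4 ^ n := by
    intro n
    have h2 : (n : ℝ) ≤ 2 ^ n := by
      exact_mod_cast (Nat.lt_two_pow_self (n := n)).le
    calc ((n : ℝ)) ^ 2 ≤ ((2 : ℝ) ^ n) ^ 2 := by
          apply pow_le_pow_left₀ (Nat.cast_nonneg n) h2
      _ = 4 ^ n := by rw [← pow_mul, mul_comm, pow_mul]; norm_num
  refine ⟨hsum1, ?_, ?_⟩
  · apply Summable.of_nonneg_of_le (fun n => mul_nonneg (by positivity) (hpn0 n)) _ hmaj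
    intro n
    have h1 : 1 / ((n.factorial : ℝ)) ^ 2 * pn2 lam n f ≤ 1 / ((n.factorial : ℝ)) ^ 2 * (K n * T) :=
      mul_le_mul_of_nonneg_left (hpn n) (by positivity)
    refine h1.trans ?_
    have heq : 1 / ((n.factorial : ℝ)) ^ 2 * (K n * T) = C * T * (B ^ n / (n.factorial : ℝ)) := by
      rw [hK_def]
      field_simp
    rw [heq]
    gcongr
    · linarith
  · apply Summable.of_nonneg_of_le (fun n => mul_nonneg (by positivity) (hpn0 n)) _ hmaj
    intro n
    have h1 : ((n : ℝ)) ^ 2 / ((n.factorial : ℝ)) ^ 2 * pn2 lam n f ≤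
        ((n : ℝ)) ^ 2 / ((n.factorial : ℝ)) ^ 2 * (K n * T) :=
      mul_le_mul_of_nonneg_left (hpn n) (by positivity)
    refine h1.trans ?_
    have heq : ((n : ℝ)) ^ 2 / ((n.factorial : ℝ)) ^ 2 * (K n * T) =
        C * T * (((n : ℝ)) ^ 2 * B ^ n / (n.factorial : ℝ)) := by
      rw [hK_def]
      field_simp
    rw [heq]
    have : ((n : ℝ)) ^ 2 * B ^ n / (n.factorial : ℝ) ≤ (4 * B) ^ n / (n.factorial : ℝ) := by
      rw [mul_pow]
      gcongr
      exact hn4 n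
    exact mul_le_mul_of_nonneg_left this (by positivity)
end
end

section
/- Let f ∈ C^∞(ℝ²) satisfy (Λ^{k+l}/(k! l!)) ‖∂_x^k ∂_v^l f‖_∞ ≤ C for all k,l ∈ ℕ₀, where Λ > 0 and C > 0. Then for every λ with 0 < λ < Λ and every n ∈ ℕ₀, |f|_{λ,n} ≤ C Λ² (n+1)! / (Λ − λ)^{n+2}. -/
open scoped BigOperators Nat
open MeasureTheory Filter

noncomputable section

open Finset in
lemma aux_geom (lam L : ℝ) (h0 : 0 < lam) (h1 : lam < L) (i : ℕ) :
    HasSum (fun k : ℕ => (k.choose i : ℝ) * lam ^ (k - i) / L ^ k)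
      (L / (L - lam) ^ (i + 1)) := by
  have hL : (0:ℝ) < L := h0.trans h1
  have hLne : L ≠ 0 := ne_of_gt hL
  have hd : L - lam ≠ 0 := ne_of_gt (by linarith)
  have hx : ‖lam / L‖ < 1 := by
    rw [Real.norm_eq_abs, abs_of_pos (div_pos h0 hL)]
    exact (div_lt_one hL).2 h1
  have H := (hasSum_choose_mul_geometric_of_norm_lt_one (𝕜 := ℝ) i hx).div_const (L ^ i)
  refine (hasSum_nat_add_iff' i).1 ?_
  convert H using 1
  · rfl
  · funext m
    simp only [Nat.add_sub_cancel, div_pow, pow_add]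
    field_simp
  · have hz : ∑ j ∈ range i, (j.choose i : ℝ) * lam ^ (j - i) / L ^ j = 0 := by
      refine Finset.sum_eq_zero fun j hj => ?_
      rw [Nat.choose_eq_zero_of_lt (mem_range.1 hj)]
      simp
    rw [hz, sub_zero, show (1 : ℝ) - lam / L = (L - lam) / L by field_simp, div_pow]
    field_simp
    ring

open Finset in
lemma aux_vand (lam : ℝ) (n k l : ℕ) :
    ∑ i ∈ range (n+1), ((k.choose i : ℝ) * lam ^ (k-i)) * ((l.choose (n-i) : ℝ) * lam ^ (l-(n-i)))
      = ((k+l).choose n : ℝ) * lam ^ (k+l-n) := by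
  rw [show ((k+l).choose n : ℝ) = ((∑ i ∈ range (n+1), k.choose i * l.choose (n-i) : ℕ) : ℝ) by
    rw [Nat.add_choose_eq, Finset.Nat.sum_antidiagonal_eq_sum_range_succ_mk]]
  push_cast
  rw [Finset.sum_mul]
  refine Finset.sum_congr rfl fun i hi => ?_
  have hin : i ≤ n := Nat.lt_succ_iff.1 (mem_range.1 hi)
  by_cases hik : i ≤ k
  · by_cases hil : n - i ≤ l
    · have he : (k - i) + (l - (n - i)) = k + l - n := by omega
      rw [mul_mul_mul_comm, ← pow_add, he, mul_assoc]
    · rw [show l.choose (n-i) = 0 from Nat.choose_eq_zero_of_lt (by omega)]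
      simp
  · rw [show k.choose i = 0 from Nat.choose_eq_zero_of_lt (by omega)]
    simp

lemma sup2_nonneg (f : ℝ → ℝ → ℝ) : 0 ≤ sup2 f :=
  Real.iSup_nonneg fun _ => Real.iSup_nonneg fun _ => abs_nonneg _

lemma acoeff_nonneg {lam : ℝ} (hlam : 0 ≤ lam) (n k l : ℕ) : 0 ≤ acoeff lam n k l := by
  unfold acoeff
  split
  · positivity
  · exact le_refl 0


set_option maxHeartbeats 1000000

/-- Quantitative bound: if `(Λ^{k+l}/(k! l!)) ‖∂ₓᵏ∂ᵥˡ f‖_∞ ≤ C` for all `k,l`, then for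
`0 < λ < Λ` and every `n`, `|f|_{λ,n} ≤ C Λ² (n+1)! / (Λ-λ)^{n+2}`. -/
theorem pnorm_le_of_analytic_bound (f : ℝ → ℝ → ℝ) (Λ C : ℝ) (hΛ : 0 < Λ) (hC : 0 < C)
    (hf : ContDiff ℝ (⊤ : ℕ∞) (fun p : ℝ × ℝ => f p.1 p.2))
    (hb : ∀ k l : ℕ,
      Λ ^ (k + l) / ((k.factorial : ℝ) * (l.factorial : ℝ)) * sup2 (D2 k l f) ≤ C)
    (lam : ℝ) (hlam0 : 0 < lam) (hlamΛ : lam < Λ) (n : ℕ) :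
    pn2 lam n f ≤ C * Λ ^ 2 * ((n + 1).factorial : ℝ) / (Λ - lam) ^ (n + 2) := by
  have hΛne : Λ ≠ 0 := ne_of_gt hΛ
  have hd0 : (0:ℝ) < Λ - lam := by linarith
  have hdne : Λ - lam ≠ 0 := ne_of_gt hd0
  -- the dominating function
  set h : ℕ × ℕ → ℝ := fun p =>
    acoeff lam n p.1 p.2 * (C * (p.1.factorial : ℝ) * (p.2.factorial : ℝ) / Λ ^ (p.1 + p.2))
    with hh
  -- pointwise bound
  have hgh : ∀ p : ℕ × ℕ, acoeff lam n p.1 p.2 * sup2 (D2 p.1 p.2 f) ≤ h p := by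
    rintro ⟨k, l⟩
    have hpos : (0:ℝ) < Λ ^ (k + l) / ((k.factorial : ℝ) * (l.factorial : ℝ)) := by
      positivity
    have hs : sup2 (D2 k l f) ≤ C * (k.factorial : ℝ) * (l.factorial : ℝ) / Λ ^ (k + l) := by
      have h1 : sup2 (D2 k l f) ≤ C / (Λ ^ (k + l) / ((k.factorial : ℝ) * (l.factorial : ℝ))) := by
        rw [le_div_iff₀ hpos, mul_comm]
        exact hb k l
      calc sup2 (D2 k l f) ≤ _ := h1
        _ = C * (k.factorial : ℝ) * (l.factorial : ℝ) / Λ ^ (k + l) := by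
          rw [div_div_eq_mul_div]; ring
    exact mul_le_mul_of_nonneg_left hs (acoeff_nonneg hlam0.le n k l)
  have hg0 : ∀ p : ℕ × ℕ, 0 ≤ acoeff lam n p.1 p.2 * sup2 (D2 p.1 p.2 f) := fun p =>
    mul_nonneg (acoeff_nonneg hlam0.le n p.1 p.2) (sup2_nonneg _)
  -- HasSum for h
  have hH : HasSum h (C * Λ ^ 2 * ((n + 1).factorial : ℝ) / (Λ - lam) ^ (n + 2)) := by
    have hterm : ∀ i ∈ Finset.range (n + 1),
        HasSum (fun p : ℕ × ℕ =>
          ((p.1.choose i : ℝ) * lam ^ (p.1 - i) / Λ ^ p.1) *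
            ((p.2.choose (n - i) : ℝ) * lam ^ (p.2 - (n - i)) / Λ ^ p.2))
          (Λ ^ 2 / (Λ - lam) ^ (n + 2)) := by
      intro i hi
      have hin : i ≤ n := Nat.lt_succ_iff.1 (Finset.mem_range.1 hi)
      have hA := aux_geom lam Λ hlam0 hlamΛ i
      have hB := aux_geom lam Λ hlam0 hlamΛ (n - i)
      have hApos : ∀ k : ℕ, 0 ≤ (k.choose i : ℝ) * lam ^ (k - i) / Λ ^ k := by
        intro k; positivity
      have hBpos : ∀ k : ℕ, 0 ≤ (k.choose (n - i) : ℝ) * lam ^ (k - (n - i)) / Λ ^ k := by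
        intro k; positivity
      have hsumm := Summable.mul_of_nonneg hA.summable hB.summable hApos hBpos
      have hsum := hA.mul hB hsumm
      convert hsum using 1
      · rfl
      rw [div_mul_div_comm, ← pow_add, show i + 1 + (n - i + 1) = n + 2 by omega, sq]
    have hS := hasSum_sum hterm
    have hSc := hS.mul_left (C * (n.factorial : ℝ))
    convert hSc using 1
    · rfl
    · funext p
      obtain ⟨k, l⟩ := p
      simp only []
      have hsum_eq : ∑ i ∈ Finset.range (n + 1),
          ((k.choose i : ℝ) * lam ^ (k - i) / Λ ^ k) *
            ((l.choose (n - i) : ℝ) * lam ^ (l - (n - i)) / Λ ^ l)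
          = ((k + l).choose n : ℝ) * lam ^ (k + l - n) / Λ ^ (k + l) := by
        rw [pow_add, ← aux_vand lam n k l, Finset.sum_div]
        refine Finset.sum_congr rfl fun i _ => ?_
        field_simp
      rw [hsum_eq, hh]
      simp only [acoeff]
      split
      · rename_i hn
        have hfact : ((k + l).factorial : ℝ) =
            ((k + l).choose n : ℝ) * (n.factorial : ℝ) * ((k + l - n).factorial : ℝ) := by
          exact_mod_cast (Nat.choose_mul_factorial_mul_factorial hn).symm
        rw [hfact]
        have hkf : ((k.factorial : ℝ)) ≠ 0 := Nat.cast_ne_zero.2 k.factorial_ne_zero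
        have hlf : ((l.factorial : ℝ)) ≠ 0 := Nat.cast_ne_zero.2 l.factorial_ne_zero
        have hsf : (((k + l - n).factorial : ℝ)) ≠ 0 := Nat.cast_ne_zero.2 (k+l-n).factorial_ne_zero
        field_simp
      · rename_i hn
        rw [show (k + l).choose n = 0 from Nat.choose_eq_zero_of_lt (by omega)]
        simp
    · rw [Finset.sum_const, Finset.card_range, nsmul_eq_mul,
        show ((n + 1).factorial : ℝ) = ((n : ℝ) + 1) * (n.factorial : ℝ) by
          rw [Nat.factorial_succ]; push_cast; ring]
      push_cast
      ring
  -- conclude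
  have hhs : Summable h := hH.summable
  have hgs : Summable (fun p : ℕ × ℕ => acoeff lam n p.1 p.2 * sup2 (D2 p.1 p.2 f)) :=
    Summable.of_nonneg_of_le hg0 hgh hhs
  calc pn2 lam n f = ∑' p : ℕ × ℕ, acoeff lam n p.1 p.2 * sup2 (D2 p.1 p.2 f) := rfl
    _ ≤ ∑' p, h p := Summable.tsum_le_tsum hgh hgs hhs
    _ = C * Λ ^ 2 * ((n + 1).factorial : ℝ) / (Λ - lam) ^ (n + 2) := hH.tsum_eq
end
end
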